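/- If a₁...aₙ is the m-th word in the full Gray code of words of length n, then (n−1) + a₁ + a₂ + ... + aₙ ≡ m (mod 2). -/

import Mathlib

/-- The full Gray code of words: for `n = 0` the single empty word; words of
the length-`n` code at even (0-indexed, i.e. odd 1-indexed) positions are
extended by last letters `1, 2, …, 2(n+1)-1` in increasing order, those at odd
(0-indexed) positions by the same last letters in decreasing order. -/
def grayCode : ℕ → List (List ℕ)
  | 0 => [[]]
  | n+1 =>
      (((grayCode n).zipIdx.map Prod.swap).map (fun p =>
        if p.1 % 2 = 0 then
          (List.range (2*n + 1)).map (fun j => p.2 ++ [j + 1])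
        else
          ((List.range (2*n + 1)).map (fun j => p.2 ++ [j + 1])).reverse)).flatten

/-- The 1-indexed `i`-th letter of a word. -/
def wd (a : List ℕ) (i : ℕ) : ℕ := a.getD (i - 1) 0

/-- A word `a₁…aₙ` is arc-disconnected if there is a `k ≥ 2` with
`a_k = 2k-1` and `a_j ≥ 2k-1` for all `j > k`. -/
def ArcDiscL (a : List ℕ) : Prop :=
  ∃ k, 2 ≤ k ∧ k ≤ a.length ∧ wd a k = 2*k - 1 ∧
    ∀ j, k < j → j ≤ a.length → 2*k - 1 ≤ wd a j


lemma flat_get {α : Type} (c : ℕ) : ∀ (L : List (List α)), (∀ l ∈ L, l.length = c) →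
    ∀ m₀ a, L.flatten[m₀]? = some a →
    ∃ p j, j < c ∧ m₀ = p * c + j ∧ ∃ l : List α, L[p]? = some l ∧ l[j]? = some a
  | [], _, m₀, a, h => by simp at h
  | l :: t, hL, m₀, a, h => by
    have hl : l.length = c := hL l (by simp)
    rw [List.flatten_cons] at h
    by_cases hm : m₀ < c
    · refine ⟨0, m₀, hm, by ring, l, rfl, ?_⟩
      rwa [List.getElem?_append_left (by omega)] at h
    · rw [List.getElem?_append_right (by omega)] at h
      obtain ⟨p, j, hj, hm', l', hl', ha⟩ :=
        flat_get c t (fun x hx => hL x (List.mem_cons_of_mem _ hx)) (m₀ - l.length) a h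
      refine ⟨p+1, j, hj, ?_, l', hl', ha⟩
      have : (p+1)*c = p*c + c := by ring
      omega

lemma flat_get' {α : Type} {L : List (List α)} {m₀ : ℕ} {a : α} {c : ℕ}
    (h : L.flatten[m₀]? = some a) (hL : ∀ l ∈ L, l.length = c) :
    ∃ p j, j < c ∧ m₀ = p * c + j ∧ ∃ l : List α, L[p]? = some l ∧ l[j]? = some a :=
  flat_get c L hL m₀ a h

lemma gray_parity : ∀ n, ∀ m₀ a, (grayCode n)[m₀]? = some a → (n + a.sum) % 2 = m₀ % 2 := by
  intro n
  induction n with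
  | zero =>
    intro m₀ a h
    match m₀ with
    | 0 => simp [grayCode] at h; simp [h]
    | k+1 => simp [grayCode] at h
  | succ n ih =>
    intro m₀ a h
    rw [show grayCode (n+1) = (((grayCode n).zipIdx.map Prod.swap).map (fun p =>
        if p.1 % 2 = 0 then
          (List.range (2*n + 1)).map (fun j => p.2 ++ [j + 1])
        else
          ((List.range (2*n + 1)).map (fun j => p.2 ++ [j + 1])).reverse)).flatten from rfl] at h
    obtain ⟨p, j, hj, hm, l, hl, ha⟩ := flat_get' (c := 2*n+1) h (by
      intro x hx
      obtain ⟨q, hq, rfl⟩ := List.mem_map.mp hx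
      split <;> simp)
    rw [List.getElem?_map, List.getElem?_map, List.getElem?_zipIdx] at hl
    obtain ⟨w, hw⟩ : ∃ w, (grayCode n)[p]? = some w := by
      cases hgw : (grayCode n)[p]? with
      | none => rw [hgw] at hl; simp at hl
      | some w => exact ⟨w, rfl⟩
    rw [hw] at hl
    simp only [Option.map_some, Prod.swap_prod_mk, zero_add] at hl
    have ihp := ih p w hw
    have hm' : p * (2*n+1) = 2*(p*n) + p := by ring
    injection hl with hl
    by_cases hp : p % 2 = 0
    · rw [if_pos hp] at hl
      rw [← hl, List.getElem?_map, List.getElem?_range hj] at ha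
      simp only [Option.map_some] at ha
      injection ha with ha
      rw [← ha]
      simp only [List.sum_append, List.sum_cons, List.sum_nil]
      omega
    · rw [if_neg hp] at hl
      rw [← hl, List.getElem?_reverse (by simpa using hj), List.length_map, List.length_range,
        List.getElem?_map, List.getElem?_range (by omega)] at ha
      simp only [Option.map_some] at ha
      injection ha with ha
      rw [← ha]
      simp only [List.sum_append, List.sum_cons, List.sum_nil]
      omega

/-- If `a` is the `m`-th word (1-indexed; here it sits at
0-indexed position `m - 1`, i.e. 0-indexed position `m₀` corresponds to
`m = m₀ + 1`) of the full Gray code of words of length `n`, then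
`(n-1) + a₁ + ⋯ + aₙ ≡ m (mod 2)`. -/
theorem stmt_11 (n : ℕ) (hn : 1 ≤ n) (m₀ : ℕ) (a : List ℕ)
    (ha : (grayCode n)[m₀]? = some a) :
    (n - 1 + a.sum) ≡ m₀ + 1 [MOD 2] := by
  have := gray_parity n m₀ a ha
  unfold Nat.ModEq
  omega
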